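/- arXiv:1605.07054 — 2 statements merged into one kernel-verified Lean document; each statement's English description precedes it below -/
import Mathlib

section
/- For real numbers a > 0, b > 0, the Fourier transform of h₀(t) = (t + ib)^{-1} e^{-a²t²}, defined by ĥ₀(w) = ∫_{-∞}^{∞} h₀(t) e^{2πitw} dt, equals -iπ e^{a²b²} e^{2πbw} erfc(ab + πw/a), where erfc(x) = (2/√π) ∫_x^∞ e^{-u²} du is the complementary error function. -/
noncomputable section
open Complex Real MeasureTheory

/-- The complementary error function `erfc(x) = (2/√π) ∫_x^∞ e^{-u²} du`. -/
def erfc (x : ℝ) : ℝ := 2 / Real.sqrt π * ∫ u in Set.Ioi x, Real.exp (-u ^ 2)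

open Set Filter in
lemma aux_integral_cexp_mul_Ioi {c : ℂ} (hc : c.re < 0) :
    ∫ s in Set.Ioi (0:ℝ), Complex.exp (c * s) = -c⁻¹ := by
  have hc0 : c ≠ 0 := by intro h; rw [h] at hc; simp at hc
  have hderiv : ∀ x ∈ Set.Ici (0:ℝ), HasDerivAt (fun s : ℝ => c⁻¹ * Complex.exp (c * s))
      (Complex.exp (c * x)) x := by
    intro x _
    have h1 : HasDerivAt (fun s : ℝ => c * (s:ℂ)) c x := by
      simpa using (Complex.ofRealCLM.hasDerivAt (x := x)).const_mul c
    have := (Complex.hasDerivAt_exp (c * x)).comp x h1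
    have h2 := this.const_mul c⁻¹
    have h3 : c⁻¹ * (Complex.exp (c * x) * c) = Complex.exp (c * x) := by
      rw [mul_comm (Complex.exp _) c, ← mul_assoc, inv_mul_cancel₀ hc0, one_mul]
    rw [h3] at h2
    exact h2
  have hint : IntegrableOn (fun s : ℝ => Complex.exp (c * s)) (Set.Ioi 0) := by
    apply Integrable.mono' (g := fun s : ℝ => Real.exp (-(-c.re) * s))
      (exp_neg_integrableOn_Ioi 0 (by linarith : (0:ℝ) < -c.re))
    · exact (Complex.continuous_exp.comp (by continuity)).aestronglyMeasurable
    · filter_upwards with s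
      rw [Complex.norm_exp]
      simp
  have htend : Tendsto (fun s : ℝ => c⁻¹ * Complex.exp (c * s)) atTop (nhds 0) := by
    rw [tendsto_zero_iff_norm_tendsto_zero]
    have : (fun s : ℝ => ‖c⁻¹ * Complex.exp (c * s)‖)
        = fun s : ℝ => ‖c⁻¹‖ * Real.exp (c.re * s) := by
      funext s; rw [norm_mul, Complex.norm_exp]
      simp
    rw [this]
    simpa using (Real.tendsto_exp_atBot.comp
      (tendsto_id.const_mul_atTop_of_neg hc)).const_mul ‖c⁻¹‖
  have := integral_Ioi_of_hasDerivAt_of_tendsto' hderiv hint htend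
  rw [this]; simp

lemma aux_shift (f : ℝ → ℝ) (c : ℝ) :
    ∫ x in Set.Ioi (0:ℝ), f (x + c) = ∫ u in Set.Ioi c, f u := by
  rw [← integral_indicator measurableSet_Ioi, ← integral_indicator measurableSet_Ioi]
  rw [← integral_add_right_eq_self (fun x => Set.indicator (Set.Ioi c) f x) c]
  congr 1
  funext x
  simp only [Set.indicator, Set.mem_Ioi]
  by_cases h : 0 < x <;> simp [h, lt_add_iff_pos_left, add_comm]

lemma aux_inv (t b : ℝ) (hb : 0 < b)
    (hI : ∫ s in Set.Ioi (0:ℝ), Complex.exp ((I*t - b) * s) = -(I*t - b)⁻¹) :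
    ((t:ℂ) + I*b)⁻¹ = -I * ∫ s in Set.Ioi (0:ℝ), Complex.exp ((I*t - b) * s) := by
  rw [hI]
  have h1 : (t:ℂ) + I*b ≠ 0 := by
    intro h
    have := congrArg Complex.im h
    simp at this
    exact hb.ne' this
  have h2 : (I*t - b : ℂ) ≠ 0 := by
    intro h
    have := congrArg Complex.re h
    simp at this
    exact hb.ne' this
  field_simp
  ring_nf
  simp [Complex.I_sq]
  rw [← sub_eq_add_neg, ← sub_mul, mul_inv_cancel₀ h2]

/-- The Fourier transform of `h₀(t) = (t+ib)⁻¹ e^{-a²t²}` equals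
`-iπ e^{a²b²} e^{2πbw} erfc(ab + πw/a)`. -/
theorem fourier_transform_h0 (a b : ℝ) (ha : 0 < a) (hb : 0 < b) (w : ℝ) :
    (∫ t : ℝ, ((t : ℂ) + I * b)⁻¹ * Complex.exp (-(a ^ 2 * t ^ 2 : ℝ))
        * Complex.exp (2 * π * I * t * w))
      = -I * π * Complex.exp ((a ^ 2 * b ^ 2 : ℝ)) * Complex.exp ((2 * π * b * w : ℝ))
          * (erfc (a * b + π * w / a) : ℂ) := by
  set G : ℝ × ℝ → ℂ := fun p =>
    Complex.exp (-(a:ℂ)^2 * p.1^2 + (I*(p.2 + 2*π*w))*p.1 + (-(b:ℂ)*p.2)) with hG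
  -- integrability of G on the product
  have hGcont : Continuous G := by
    apply Complex.continuous_exp.comp
    fun_prop
  have hGnorm : ∀ p : ℝ × ℝ, ‖G p‖ =
      Real.exp (-(a^2) * p.1^2) * Real.exp (-b * p.2) := by
    rintro ⟨t, s⟩
    have h : (-(a:ℂ)^2 * t^2 + (I*(s + 2*π*w))*t + (-(b:ℂ)*s))
        = Complex.I * ((s + 2*π*w)*t : ℝ) + ((-(a^2) * t^2 + (-b * s) : ℝ) : ℂ) := by
      push_cast; ring
    rw [hG]
    simp only [h, Complex.norm_exp]
    rw [Complex.add_re, Complex.I_mul_re, Complex.ofReal_im, Complex.ofReal_re]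
    rw [neg_zero, zero_add, Real.exp_add]
  have hGint : Integrable G (volume.prod (volume.restrict (Set.Ioi 0))) := by
    apply Integrable.mono'
      (Integrable.mul_prod (integrable_exp_neg_mul_sq (by positivity : (0:ℝ) < a^2))
        (exp_neg_integrableOn_Ioi 0 hb))
    · exact hGcont.aestronglyMeasurable
    · filter_upwards with p
      rw [hGnorm p]
  -- pointwise rewriting of the integrand
  have hpoint : ∀ t : ℝ, ((t:ℂ) + I * b)⁻¹ * Complex.exp (-(a ^ 2 * t ^ 2 : ℝ))
      * Complex.exp (2 * π * I * t * w) = -I * ∫ s in Set.Ioi (0:ℝ), G (t, s) := by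
    intro t
    have hc : (I*(t:ℂ) - b).re < 0 := by simpa using hb
    have hI' := aux_integral_cexp_mul_Ioi hc
    rw [aux_inv t b hb hI']
    rw [show (-I * ∫ s in Set.Ioi (0:ℝ), Complex.exp ((I*t - b) * s))
          * Complex.exp (-(a ^ 2 * t ^ 2 : ℝ)) * Complex.exp (2 * π * I * t * w)
        = -I * ((∫ s in Set.Ioi (0:ℝ), Complex.exp ((I*t - b) * s))
          * Complex.exp (-(a ^ 2 * t ^ 2 : ℝ)) * Complex.exp (2 * π * I * t * w))
      from by ring]
    congr 1
    rw [← integral_mul_const (Complex.exp (-(a ^ 2 * t ^ 2 : ℝ)))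
        (fun s : ℝ => Complex.exp ((I*t - b) * s)),
      ← integral_mul_const (Complex.exp (2 * π * I * t * w))
        (fun s : ℝ => Complex.exp ((I*t - b) * s) * Complex.exp (-(a ^ 2 * t ^ 2 : ℝ)))]
    refine setIntegral_congr_fun measurableSet_Ioi fun s _ => ?_
    rw [hG]
    simp only
    rw [← Complex.exp_add, ← Complex.exp_add]
    congr 1
    push_cast
    ring
  rw [integral_congr_ae (Filter.Eventually.of_forall hpoint), integral_const_mul,
    integral_integral_swap hGint]
  -- inner Gaussian integral
  have ha2 : (-(a:ℂ)^2).re < 0 := by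
    simp only [neg_re, ← Complex.ofReal_pow, Complex.ofReal_re]
    exact neg_lt_zero.2 (pow_pos ha 2)
  have hinner : ∀ s : ℝ, (∫ t : ℝ, G (t, s))
      = ((Real.sqrt π / a : ℝ) : ℂ)
        * ((Real.exp (-(b*s) - (s + 2*π*w)^2/(4*a^2)) : ℝ) : ℂ) := by
    intro s
    have h := integral_cexp_quadratic ha2 (I*((s:ℂ) + 2*π*w)) (-(b:ℂ)*s)
    rw [hG]
    simp only
    rw [h]
    congr 1
    · rw [show (↑π / -(-(a:ℂ)^2)) = (((π / a^2 : ℝ)) : ℂ) by push_cast; ring,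
        show (1/2 : ℂ) = ((1/2 : ℝ) : ℂ) by norm_num,
        ← Complex.ofReal_cpow (by positivity) (1/2 : ℝ)]
      congr 1
      rw [← Real.sqrt_eq_rpow, show π / a^2 = (Real.sqrt π / a)^2 by
        rw [div_pow, Real.sq_sqrt Real.pi_pos.le]]
      exact Real.sqrt_sq (by positivity)
    · rw [Complex.ofReal_exp]
      congr 1
      rw [mul_pow, Complex.I_sq]
      push_cast
      field_simp
  rw [setIntegral_congr_fun measurableSet_Ioi (fun s _ => hinner s), integral_const_mul]
  rw [show (∫ s in Set.Ioi (0:ℝ),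
      ((Real.exp (-(b*s) - (s + 2*π*w)^2/(4*a^2)) : ℝ) : ℂ))
    = ((∫ s in Set.Ioi (0:ℝ), Real.exp (-(b*s) - (s + 2*π*w)^2/(4*a^2)) : ℝ) : ℂ)
    from integral_ofReal]
  -- the real integral
  have hrpt : ∀ s : ℝ, -(b*s) - (s + 2*π*w)^2/(4*a^2)
      = (a^2*b^2 + 2*π*b*w) + -((s * (2*a)⁻¹ + (a*b + π*w/a))^2) := by
    intro s
    field_simp
    ring
  have hreal : (∫ s in Set.Ioi (0:ℝ), Real.exp (-(b*s) - (s + 2*π*w)^2/(4*a^2)))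
      = Real.exp (a^2*b^2 + 2*π*b*w)
        * ((2*a) * ∫ u in Set.Ioi (a*b + π*w/a), Real.exp (-u^2)) := by
    simp_rw [hrpt, Real.exp_add, integral_const_mul]
    congr 1
    have h1 := integral_comp_mul_right_Ioi
      (fun x => Real.exp (-((x + (a*b + π*w/a))^2))) 0
      (by positivity : (0:ℝ) < (2*a)⁻¹)
    simp only [zero_mul, inv_inv, smul_eq_mul] at h1
    rw [h1, aux_shift (fun u => Real.exp (-u^2)) (a*b + π*w/a)]
  rw [hreal]
  -- final constant bookkeeping
  rw [show erfc (a*b + π*w/a) = 2 / Real.sqrt π * ∫ u in Set.Ioi (a*b + π*w/a),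
    Real.exp (-u^2) from by rw [erfc]]
  push_cast
  have hsp : (Real.sqrt π : ℂ) ≠ 0 := by
    simpa using (Real.sqrt_ne_zero'.2 Real.pi_pos)
  have hpi : (Real.sqrt π : ℂ) * (Real.sqrt π : ℂ) = (π : ℂ) := by
    rw [← Complex.ofReal_mul, Real.mul_self_sqrt Real.pi_pos.le]
  have hA : ((a:ℂ)) ≠ 0 := by simpa using ha.ne'
  have h2 : ((Real.sqrt π : ℂ))/a * (2*a) = (π:ℂ) * (2/(Real.sqrt π : ℂ)) := by
    have hpi2 : (Real.sqrt π : ℂ)^2 = (π:ℂ) := by rw [sq, hpi]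
    field_simp
    linear_combination hpi2
  rw [Complex.exp_add]
  linear_combination (-I * Complex.exp ((a:ℂ)^2*(b:ℂ)^2)
    * Complex.exp (2*(π:ℂ)*(b:ℂ)*(w:ℂ))
    * ((∫ u in Set.Ioi (a*b + π*w/a), Real.exp (-u^2) : ℝ) : ℂ)) * h2
end
end

section
/- For real a > 0, b > 0 the Fourier transform of f(t) = e^{-a²t²}/(t²+b²) is given by f̂(w) = (π/(2b)) e^{a²b²} ( e^{2πbw} erfc(ab + πw/a) + e^{-2πbw} erfc(ab - πw/a) ). -/
noncomputable section
open Complex Real MeasureTheory Set Filter Topology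

lemma cexp_integral_Ioi (z : ℂ) (hz : z.re < 0) :
    ∫ s in Ioi (0:ℝ), Complex.exp (z * s) = -z⁻¹ := by
  have hz0 : z ≠ 0 := fun h => by simp [h] at hz
  have hint : IntegrableOn (fun s : ℝ => Complex.exp (z * s)) (Ioi 0) := by
    refine Integrable.mono' (g := fun s => Real.exp (-(-z.re) * s))
      (exp_neg_integrableOn_Ioi 0 (by linarith)) ?_ ?_
    · exact (Complex.continuous_exp.comp (continuous_const.mul Complex.continuous_ofReal)).aestronglyMeasurable
    · filter_upwards with s
      simp [Complex.norm_exp]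
  have hderiv : ∀ x ∈ Ici (0:ℝ), HasDerivAt (fun s : ℝ => Complex.exp (z * s) / z)
      (Complex.exp (z * x)) x := by
    intro x _
    have h1 : HasDerivAt (fun s : ℝ => (s : ℂ)) 1 x := Complex.ofRealCLM.hasDerivAt
    have h2 := ((h1.const_mul z).cexp).div_const z
    convert h2 using 1
    · rfl
    · rw [mul_one, mul_div_assoc, div_self hz0, mul_one]
  have htend : Tendsto (fun s : ℝ => Complex.exp (z * s) / z) atTop (𝓝 0) := by
    rw [tendsto_zero_iff_norm_tendsto_zero]
    have : (fun s : ℝ => ‖Complex.exp (z * s) / z‖) = fun s => Real.exp (z.re * s) / ‖z‖ := by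
      ext s; simp [Complex.norm_exp]
    rw [this]
    have h3 : Tendsto (fun s : ℝ => z.re * s) atTop atBot :=
      tendsto_id.const_mul_atTop_of_neg hz
    simpa using (Real.tendsto_exp_atBot.comp h3).div_const ‖z‖
  have := integral_Ioi_of_hasDerivAt_of_tendsto' hderiv hint htend
  rw [this]
  simp [Complex.exp_zero]

lemma integrableOn_Iic_comp_neg {E : Type*} [NormedAddCommGroup E] {f : ℝ → E} (hf : IntegrableOn (fun x => f (-x)) (Ioi (0:ℝ))) :
    IntegrableOn f (Iic (0:ℝ)) := by
  have m : MeasurableEmbedding fun x : ℝ => -x := (Homeomorph.neg ℝ).measurableEmbedding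
  rw [← Measure.map_neg_eq_self (volume : Measure ℝ), m.integrableOn_map_iff]
  have : (fun x : ℝ => -x) ⁻¹' (Iic 0) = Ici 0 := by ext x; simp
  rw [this]
  exact Iff.mpr integrableOn_Ici_iff_integrableOn_Ioi hf

lemma poisson_rep (b : ℝ) (hb : 0 < b) (t : ℝ) :
    ∫ s : ℝ, Complex.exp (-(2 * π * b) * ↑|s| - 2 * π * I * s * t)
      = (((b / π) / (t ^ 2 + b ^ 2) : ℝ) : ℂ) := by
  set F : ℝ → ℂ := fun s => Complex.exp (-(2 * π * b) * ↑|s| - 2 * π * I * s * t) with hF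
  have hc : (0:ℝ) < 2 * π * b := by positivity
  have hIoi : ∫ s in Ioi (0:ℝ), F s = ((2*π*b : ℂ) + 2*π*I*t)⁻¹ := by
    rw [setIntegral_congr_fun measurableSet_Ioi
      (show EqOn F (fun s : ℝ => Complex.exp ((-(2*π*b) - 2*π*I*t) * s)) (Ioi 0) by
        intro s hs
        simp only [hF, abs_of_pos (mem_Ioi.mp hs)]
        congr 1
        push_cast
        ring)]
    rw [cexp_integral_Ioi _ (by simp [hc]), ← inv_neg]
    congr 1
    ring
  have hIic : ∫ s in Iic (0:ℝ), F s = ((2*π*b : ℂ) - 2*π*I*t)⁻¹ := by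
    have h0 := integral_comp_neg_Ioi (0:ℝ) F
    rw [neg_zero] at h0
    rw [← h0]
    rw [setIntegral_congr_fun measurableSet_Ioi
      (show EqOn (fun x : ℝ => F (-x)) (fun s : ℝ => Complex.exp ((-(2*π*b) + 2*π*I*t) * s)) (Ioi 0) by
        intro s hs
        simp only [hF, abs_neg, abs_of_pos (mem_Ioi.mp hs)]
        congr 1
        push_cast
        ring)]
    rw [cexp_integral_Ioi _ (by simp [hc]), ← inv_neg]
    congr 1
    ring
  have hmeas : Continuous F := by
    apply Complex.continuous_exp.comp
    continuity
  have hi1 : IntegrableOn F (Ioi 0) := by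
    refine Integrable.mono' (g := fun s => Real.exp (-(2*π*b) * s))
      (exp_neg_integrableOn_Ioi 0 hc) hmeas.aestronglyMeasurable.restrict ?_
    filter_upwards [ae_restrict_mem measurableSet_Ioi] with s hs
    simp [hF, Complex.norm_exp, abs_of_pos (mem_Ioi.mp hs)]
  have hi2 : IntegrableOn F (Iic 0) := by
    apply integrableOn_Iic_comp_neg
    refine Integrable.mono' (g := fun s => Real.exp (-(2*π*b) * s))
      (exp_neg_integrableOn_Ioi 0 hc) ((hmeas.comp continuous_neg).aestronglyMeasurable.restrict) ?_
    filter_upwards [ae_restrict_mem measurableSet_Ioi] with s hs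
    simp [hF, Complex.norm_exp, abs_of_pos (mem_Ioi.mp hs)]
  rw [← intervalIntegral.integral_Iic_add_Ioi hi2 hi1, hIic, hIoi]
  have h1 : (2*π*b : ℂ) - 2*π*I*t ≠ 0 := by
    intro h
    have := congrArg Complex.re h
    simp at this
    exact hb.ne' this
  have h2 : (2*π*b : ℂ) + 2*π*I*t ≠ 0 := by
    intro h
    have := congrArg Complex.re h
    simp at this
    exact hb.ne' this
  have hd' : (t^2+b^2 : ℝ) ≠ 0 := by positivity
  have hd : ((t:ℂ) ^ 2 + (b:ℂ) ^ 2) ≠ 0 := by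
    rw [show ((t:ℂ)^2+(b:ℂ)^2) = ((t^2+b^2:ℝ):ℂ) by push_cast; ring]
    exact_mod_cast hd'
  have hπ : (π : ℂ) ≠ 0 := by exact_mod_cast Real.pi_ne_zero
  push_cast
  field_simp
  ring_nf
  have h3 : (b:ℂ) - I * t ≠ 0 := fun h => h1 (by linear_combination (2 * π : ℂ) * h)
  have h4 : (b:ℂ) + I * t ≠ 0 := fun h => h2 (by linear_combination (2 * π : ℂ) * h)
  field_simp
  linear_combination (2 * b * t ^ 2 : ℂ) * Complex.I_sq


lemma integral_comp_add_right_Ioi' (f : ℝ → ℝ) (r d : ℝ) :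
    ∫ x in Ioi r, f (x + d) = ∫ x in Ioi (r + d), f x := by
  have h := (measurePreserving_add_right (volume : Measure ℝ) d).setIntegral_image_emb
    (measurableEmbedding_addRight d) f (Ioi r)
  rw [← h]
  congr 1
  ext x
  simp [mem_image]

lemma integral_exp_neg_affine_sq_Ioi (k β r : ℝ) (hk : 0 < k) :
    ∫ s in Ioi r, Real.exp (-(k * s + β)^2) = Real.sqrt π / (2 * k) * erfc (k * r + β) := by
  have h0 : (∫ s in Ioi r, Real.exp (-(k * s + β)^2))
      = ∫ s in Ioi r, (fun u => Real.exp (-(u + β)^2)) (k * s) := rfl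
  rw [h0, integral_comp_mul_left_Ioi (fun u => Real.exp (-(u + β)^2)) r hk,
    integral_comp_add_right_Ioi' (fun u => Real.exp (-u^2)) (k*r) β]
  rw [erfc]
  have hs : Real.sqrt π ≠ 0 := by
    positivity
  rw [smul_eq_mul]
  field_simp

lemma real_side (a b w : ℝ) (ha : 0 < a) (hb : 0 < b) :
    ∫ y : ℝ, Real.exp (-(2 * π * b) * |y|) * Real.exp (-(π / a) ^ 2 * (w - y) ^ 2)
      = Real.exp (a ^ 2 * b ^ 2) * Real.exp (2 * π * b * w)
          * (Real.sqrt π / (2 * (π / a)) * erfc (a * b + π * w / a))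
        + Real.exp (a ^ 2 * b ^ 2) * Real.exp (-(2 * π * b * w))
          * (Real.sqrt π / (2 * (π / a)) * erfc (a * b - π * w / a)) := by
  have hπ := Real.pi_pos
  have hk : (0:ℝ) < π / a := by positivity
  have hc : (0:ℝ) < 2 * π * b := by positivity
  set f : ℝ → ℝ := fun y => Real.exp (-(2 * π * b) * |y|)
    * Real.exp (-(π / a) ^ 2 * (w - y) ^ 2) with hf
  have hfc : Continuous f := by
    apply Continuous.mul
    · exact Real.continuous_exp.comp (continuous_const.mul continuous_abs)
    · exact Real.continuous_exp.comp (continuous_const.mul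
        ((continuous_const.sub continuous_id).pow 2))
  have hbound : ∀ y : ℝ, 0 < y → f y ≤ Real.exp (-(2 * π * b) * y) := by
    intro y hy
    calc f y = Real.exp (-(2 * π * b) * y) * Real.exp (-(π / a) ^ 2 * (w - y) ^ 2) := by
          simp only [hf, abs_of_pos hy]
      _ ≤ Real.exp (-(2 * π * b) * y) * 1 := by
          gcongr
          exact Real.exp_le_one_iff.mpr
            (by nlinarith [sq_nonneg (w - y), sq_nonneg (π / a)])
      _ = Real.exp (-(2 * π * b) * y) := mul_one _
  have hbound2 : ∀ y : ℝ, 0 < y → f (-y) ≤ Real.exp (-(2 * π * b) * y) := by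
    intro y hy
    calc f (-y) = Real.exp (-(2 * π * b) * y) * Real.exp (-(π / a) ^ 2 * (w - -y) ^ 2) := by
          simp only [hf, abs_neg, abs_of_pos hy]
      _ ≤ Real.exp (-(2 * π * b) * y) * 1 := by
          gcongr
          exact Real.exp_le_one_iff.mpr
            (by nlinarith [sq_nonneg (w - -y), sq_nonneg (π / a)])
      _ = Real.exp (-(2 * π * b) * y) := mul_one _
  have hfnn : ∀ y : ℝ, 0 ≤ f y := fun y => by positivity
  have hi1 : IntegrableOn f (Ioi 0) := by
    refine Integrable.mono' (exp_neg_integrableOn_Ioi 0 hc)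
      hfc.aestronglyMeasurable.restrict ?_
    filter_upwards [ae_restrict_mem measurableSet_Ioi] with y hy
    rw [Real.norm_eq_abs, _root_.abs_of_nonneg (hfnn y)]
    exact hbound y (mem_Ioi.mp hy)
  have hi2 : IntegrableOn f (Iic 0) := by
    apply integrableOn_Iic_comp_neg
    refine Integrable.mono' (exp_neg_integrableOn_Ioi 0 hc)
      ((hfc.comp continuous_neg).aestronglyMeasurable.restrict) ?_
    filter_upwards [ae_restrict_mem measurableSet_Ioi] with y hy
    rw [Real.norm_eq_abs, _root_.abs_of_nonneg (hfnn (-y))]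
    exact hbound2 y (mem_Ioi.mp hy)
  have hIoi : ∫ y in Ioi (0:ℝ), f y
      = Real.exp (a ^ 2 * b ^ 2) * Real.exp (-(2 * π * b * w))
          * (Real.sqrt π / (2 * (π / a)) * erfc (a * b - π * w / a)) := by
    have heq : EqOn f (fun s : ℝ => (Real.exp (a ^ 2 * b ^ 2) * Real.exp (-(2 * π * b * w)))
        * Real.exp (-((π / a) * s + (a * b - π * w / a)) ^ 2)) (Ioi 0) := by
      intro s hs
      simp only [hf, abs_of_pos (mem_Ioi.mp hs)]
      rw [← Real.exp_add, ← Real.exp_add, ← Real.exp_add]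
      congr 1
      field_simp
      ring
    rw [setIntegral_congr_fun measurableSet_Ioi heq, integral_const_mul,
      integral_exp_neg_affine_sq_Ioi (π / a) (a * b - π * w / a) 0 hk, mul_zero, zero_add]
  have hIic : ∫ y in Iic (0:ℝ), f y
      = Real.exp (a ^ 2 * b ^ 2) * Real.exp (2 * π * b * w)
          * (Real.sqrt π / (2 * (π / a)) * erfc (a * b + π * w / a)) := by
    have h0 := integral_comp_neg_Ioi (0:ℝ) f
    rw [neg_zero] at h0
    rw [← h0]
    have heq : EqOn (fun x : ℝ => f (-x))
        (fun s : ℝ => (Real.exp (a ^ 2 * b ^ 2) * Real.exp (2 * π * b * w))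
          * Real.exp (-((π / a) * s + (a * b + π * w / a)) ^ 2)) (Ioi 0) := by
      intro s hs
      simp only [hf, abs_neg, abs_of_pos (mem_Ioi.mp hs)]
      rw [← Real.exp_add, ← Real.exp_add, ← Real.exp_add]
      congr 1
      field_simp
      ring
    rw [setIntegral_congr_fun measurableSet_Ioi heq, integral_const_mul,
      integral_exp_neg_affine_sq_Ioi (π / a) (a * b + π * w / a) 0 hk, mul_zero, zero_add]
  rw [← intervalIntegral.integral_Iic_add_Ioi hi2 hi1, hIic, hIoi]

/-- The Fourier transform of `f(t) = e^{-a²t²}/(t²+b²)` equals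
`(π/(2b)) e^{a²b²} (e^{2πbw} erfc(ab + πw/a) + e^{-2πbw} erfc(ab - πw/a))`. -/
theorem fourier_transform_gaussian_over_quadratic (a b : ℝ) (ha : 0 < a) (hb : 0 < b) (w : ℝ) :
    (∫ t : ℝ, ((Real.exp (-(a ^ 2 * t ^ 2)) / (t ^ 2 + b ^ 2) : ℝ) : ℂ)
        * Complex.exp (2 * π * I * t * w))
      = ((π / (2 * b) * Real.exp (a ^ 2 * b ^ 2) : ℝ) : ℂ)
          * ((Real.exp (2 * π * b * w) * erfc (a * b + π * w / a)
              + Real.exp (-(2 * π * b * w)) * erfc (a * b - π * w / a) : ℝ) : ℂ) := by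
  have hπ := Real.pi_pos
  have hc : (0:ℝ) < 2 * π * b := by positivity
  have hk : (0:ℝ) < π / a := by positivity
  set k : ℝ := π / a with hkdef
  set K : ℝ → ℝ → ℂ := fun t s =>
    Complex.exp (-(2 * π * b) * ↑|s| - 2 * π * I * s * t)
      * (Complex.exp (-(a^2 : ℂ) * t^2) * Complex.exp (2 * π * I * t * w)) with hK
  -- Step 1: pointwise in t
  have key1 : ∀ t : ℝ,
      ((Real.exp (-(a ^ 2 * t ^ 2)) / (t ^ 2 + b ^ 2) : ℝ) : ℂ) * Complex.exp (2 * π * I * t * w)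
        = ((π / b : ℝ) : ℂ) * ∫ s : ℝ, K t s := by
    intro t
    have h1 : ∫ s : ℝ, K t s
        = (((b / π) / (t ^ 2 + b ^ 2) : ℝ) : ℂ)
          * (Complex.exp (-(a^2 : ℂ) * t^2) * Complex.exp (2 * π * I * t * w)) := by
      rw [hK, integral_mul_const, poisson_rep b hb t]
    rw [h1]
    have h2 : Complex.exp (-(a^2 : ℂ) * t^2) = ((Real.exp (-(a ^ 2 * t ^ 2)) : ℝ) : ℂ) := by
      rw [Complex.ofReal_exp]
      congr 1
      push_cast
      ring
    rw [h2]
    have hd : ((t ^ 2 + b ^ 2 : ℝ) : ℂ) ≠ 0 := by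
      exact_mod_cast (by positivity : (t^2+b^2 : ℝ) ≠ 0)
    rw [← mul_assoc, ← Complex.ofReal_mul]
    have h4 : (π / b) * ((b / π) / (t ^ 2 + b ^ 2)) = 1 / (t ^ 2 + b ^ 2) := by
      have : (t^2+b^2 : ℝ) ≠ 0 := by positivity
      field_simp
    rw [h4]
    push_cast
    ring
  simp_rw [key1]
  rw [integral_const_mul]
  -- integrability of the absolute-value exponential
  have hg : Integrable (fun s : ℝ => Real.exp (-(2 * π * b) * |s|)) := by
    have hcont : Continuous fun s : ℝ => Real.exp (-(2 * π * b) * |s|) := by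
      continuity
    have h1 : IntegrableOn (fun s : ℝ => Real.exp (-(2 * π * b) * |s|)) (Ioi 0) := by
      refine Integrable.mono' (exp_neg_integrableOn_Ioi 0 hc)
        hcont.aestronglyMeasurable.restrict ?_
      filter_upwards [ae_restrict_mem measurableSet_Ioi] with s hs
      rw [Real.norm_eq_abs, abs_of_pos (Real.exp_pos _), abs_of_pos (mem_Ioi.mp hs)]
    have h2 : IntegrableOn (fun s : ℝ => Real.exp (-(2 * π * b) * |s|)) (Iic 0) := by
      apply integrableOn_Iic_comp_neg
      simpa [abs_neg] using h1
    have h3 := h2.union h1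
    rw [Iic_union_Ioi] at h3
    exact integrableOn_univ.mp h3
  have hKnorm : ∀ t s : ℝ, ‖K t s‖ = Real.exp (-a ^ 2 * t ^ 2) * Real.exp (-(2 * π * b) * |s|) := by
    intro t s
    rw [hK]
    simp only [norm_mul, Complex.norm_exp]
    have e1 : (-(2 * π * b : ℂ) * ↑|s| - 2 * π * I * s * t).re = -(2 * π * b) * |s| := by
      simp
    have e2 : (-(a ^ 2 : ℂ) * (t : ℂ) ^ 2).re = -a ^ 2 * t ^ 2 := by
      simp [pow_two]
    have e3 : ((2 : ℂ) * π * I * t * w).re = 0 := by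
      simp
    rw [e1, e2, e3]
    rw [Real.exp_zero]
    ring
  have hKint : Integrable (Function.uncurry K) ((volume : Measure ℝ).prod volume) := by
    have hdom : Integrable
        (fun p : ℝ × ℝ => Real.exp (-a ^ 2 * p.1 ^ 2) * Real.exp (-(2 * π * b) * |p.2|))
        ((volume : Measure ℝ).prod volume) :=
      Integrable.mul_prod (integrable_exp_neg_mul_sq (by positivity : (0:ℝ) < a ^ 2)) hg
    refine hdom.mono' ?_ ?_
    · apply Continuous.aestronglyMeasurable
      rw [hK]
      apply Continuous.mul
      · apply Complex.continuous_exp.comp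
        refine Continuous.sub ?_ ?_
        · exact (continuous_const.mul (Complex.continuous_ofReal.comp
            (continuous_abs.comp continuous_snd)))
        · exact (continuous_const.mul (Complex.continuous_ofReal.comp continuous_snd)).mul
            (Complex.continuous_ofReal.comp continuous_fst)
      · apply Continuous.mul
        · exact Complex.continuous_exp.comp (continuous_const.mul
            ((Complex.continuous_ofReal.comp continuous_fst).pow 2))
        · exact Complex.continuous_exp.comp ((continuous_const.mul
            (Complex.continuous_ofReal.comp continuous_fst)).mul continuous_const)
    · filter_upwards with p
      rw [Function.uncurry]
      rw [hKnorm p.1 p.2]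
  rw [integral_integral_swap hKint]
  have ha2 : (0:ℝ) < a ^ 2 := by positivity
  have key2 : ∀ s : ℝ, (∫ t : ℝ, K t s)
      = ((Real.exp (-(2 * π * b) * |s|) * (Real.sqrt π / a * Real.exp (-k ^ 2 * (w - s) ^ 2)) : ℝ) : ℂ) := by
    intro s
    have hre : (fun t : ℝ => K t s)
        = fun t : ℝ => Complex.exp (-(2 * π * b : ℂ) * ↑|s|)
            * (Complex.exp (I * ((2 * π * (w - s) : ℝ) : ℂ) * t) * Complex.exp (-(a:ℂ)^2 * t^2)) := by
      funext t
      simp only [hK]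
      rw [← Complex.exp_add, ← Complex.exp_add, ← Complex.exp_add, ← Complex.exp_add]
      congr 1
      push_cast
      ring
    rw [hre, integral_const_mul,
      fourierIntegral_gaussian (show 0 < ((a:ℂ)^2).re by
        rw [← Complex.ofReal_pow, Complex.ofReal_re]; exact ha2) _]
    have hfac : ((π : ℂ) / (a:ℂ)^2) ^ (1/2 : ℂ) = ((Real.sqrt π / a : ℝ) : ℂ) := by
      rw [show ((π:ℂ) / (a:ℂ)^2) = (((π / a^2 : ℝ)) : ℂ) by push_cast; ring,
        show ((1/2 : ℂ)) = (((1/2 : ℝ) : ℂ)) by norm_num,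
        ← Complex.ofReal_cpow (by positivity)]
      congr 1
      rw [← Real.sqrt_eq_rpow, Real.sqrt_div (le_of_lt hπ), Real.sqrt_sq ha.le]
    have hexp2 : -((2 * π * (w - s) : ℝ) : ℂ)^2 / (4 * (a:ℂ)^2) = ((-k^2 * (w-s)^2 : ℝ) : ℂ) := by
      have hac : ((a:ℝ) : ℂ) ≠ 0 := by exact_mod_cast ha.ne'
      rw [hkdef]
      push_cast
      field_simp
      ring
    rw [hfac, hexp2]
    rw [show Complex.exp (-(2 * π * b : ℂ) * ↑|s|)
        = ((Real.exp (-(2 * π * b) * |s|) : ℝ) : ℂ) by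
      rw [Complex.ofReal_exp]; congr 1; push_cast; ring]
    rw [← Complex.ofReal_exp]
    push_cast
    ring
  simp_rw [key2]
  have hri : ∫ (y : ℝ), ((Real.exp (-(2 * π * b) * |y|)
        * (Real.sqrt π / a * Real.exp (-k ^ 2 * (w - y) ^ 2)) : ℝ) : ℂ)
      = ((∫ y : ℝ, Real.exp (-(2 * π * b) * |y|)
          * (Real.sqrt π / a * Real.exp (-k ^ 2 * (w - y) ^ 2)) : ℝ) : ℂ) := integral_ofReal
  rw [hri]
  rw [← Complex.ofReal_mul, ← Complex.ofReal_mul]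
  congr 1
  -- now a purely real statement
  have hmid : (fun y : ℝ => Real.exp (-(2 * π * b) * |y|)
      * (Real.sqrt π / a * Real.exp (-k ^ 2 * (w - y) ^ 2)))
      = fun y : ℝ => Real.sqrt π / a
        * (Real.exp (-(2 * π * b) * |y|) * Real.exp (-k ^ 2 * (w - y) ^ 2)) := by
    funext y; ring
  rw [hmid, integral_const_mul]
  simp only [hkdef]
  rw [real_side a b w ha hb]
  have hsπ : Real.sqrt π ≠ 0 := by positivity
  have hs5 : Real.sqrt π / (2 * (π / a)) = a / (2 * Real.sqrt π) := by
    have hss : Real.sqrt π ^ 2 = π := Real.sq_sqrt hπ.le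
    field_simp
    linear_combination hss
  rw [hs5]
  field_simp
end
end
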